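/- Let 0 < α₀ < π/2. Among all C¹ functions θ: [−α₀, α₀] → ℝ with θ(−α₀) = 0 and θ(α₀) = π, the functional F(θ) = ∫_{−α₀}^{α₀} √(1 + cos²(α)·θ'(α)²) dα is minimized by θ*(α) = arcsin(cot(α₀)·tan(α)) + π/2, and the minimum value is π·cos(α₀) + ∫_{−α₀}^{α₀} √(1 − cos²(α₀)/cos²(α)) dα. -/

import Mathlib

open Real

/-- Pointwise inequality: `√(1 - c₀²/c²) + c₀ t ≤ √(1 + c² t²)` for `0 < c₀ ≤ c`. -/
lemma stmt14_key (c₀ c t : ℝ) (hc0 : 0 < c₀) (hc : c₀ ≤ c) :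
    Real.sqrt (1 - c₀ ^ 2 / c ^ 2) + c₀ * t ≤ Real.sqrt (1 + c ^ 2 * t ^ 2) := by
  have hcpos : 0 < c := lt_of_lt_of_le hc0 hc
  set U := Real.sqrt (c ^ 2 - c₀ ^ 2) with hUdef
  have hU2 : U ^ 2 = c ^ 2 - c₀ ^ 2 := Real.sq_sqrt (by nlinarith)
  have hU : 0 ≤ U := Real.sqrt_nonneg _
  have hrw : Real.sqrt (1 - c₀ ^ 2 / c ^ 2) = U / c := by
    rw [show (1 : ℝ) - c₀ ^ 2 / c ^ 2 = (U / c) ^ 2 by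
      field_simp; nlinarith]
    exact Real.sqrt_sq (by positivity)
  set S := Real.sqrt (1 + c ^ 2 * t ^ 2) with hSdef
  have hS2 : S ^ 2 = 1 + c ^ 2 * t ^ 2 := Real.sq_sqrt (by positivity)
  have hS : 0 ≤ S := Real.sqrt_nonneg _
  rw [hrw]
  have hsq : (U + c * (c₀ * t)) ^ 2 ≤ (c * S) ^ 2 := by
    nlinarith [sq_nonneg (c * t * U - c₀)]
  have key : U + c * (c₀ * t) ≤ c * S := by
    have h1 : U + c * (c₀ * t) ≤ |U + c * (c₀ * t)| := le_abs_self _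
    have h2 : |U + c * (c₀ * t)| ≤ c * S := by
      rw [← Real.sqrt_sq_eq_abs, ← Real.sqrt_sq (by positivity : (0:ℝ) ≤ c * S)]
      exact Real.sqrt_le_sqrt hsq
    linarith
  rw [div_add' _ _ _ (ne_of_gt hcpos), div_le_iff₀ hcpos]
  linarith [key]

/-- Equality case: when `t = c₀ / (c √(c² - c₀²))` with `0 < c₀ < c`. -/
lemma stmt14_eq (c₀ c : ℝ) (hc0 : 0 < c₀) (hc : c₀ < c) :
    Real.sqrt (1 + c ^ 2 * (c₀ / (c * Real.sqrt (c ^ 2 - c₀ ^ 2))) ^ 2) =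
      Real.sqrt (1 - c₀ ^ 2 / c ^ 2) +
        c₀ * (c₀ / (c * Real.sqrt (c ^ 2 - c₀ ^ 2))) := by
  have hcpos : 0 < c := lt_trans hc0 hc
  set U := Real.sqrt (c ^ 2 - c₀ ^ 2) with hUdef
  have hU2 : U ^ 2 = c ^ 2 - c₀ ^ 2 := Real.sq_sqrt (by nlinarith)
  have hU : 0 < U := Real.sqrt_pos.2 (by nlinarith)
  have hrw : Real.sqrt (1 - c₀ ^ 2 / c ^ 2) = U / c := by
    rw [show (1 : ℝ) - c₀ ^ 2 / c ^ 2 = (U / c) ^ 2 by field_simp; nlinarith]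
    exact Real.sqrt_sq (by positivity)
  have h1 : (1 : ℝ) + c ^ 2 * (c₀ / (c * U)) ^ 2 = (c / U) ^ 2 := by
    field_simp
    linear_combination hU2
  rw [h1, Real.sqrt_sq (by positivity), hrw]
  field_simp
  linear_combination -hU2

set_option maxHeartbeats 1000000 in
theorem stmt14 (α₀ : ℝ) (h0 : 0 < α₀) (h1 : α₀ < π / 2) :
    (∀ θ : ℝ → ℝ, ContDiff ℝ 1 θ → θ (-α₀) = 0 → θ α₀ = π →
      (∫ α in (-α₀)..α₀, Real.sqrt (1 + Real.cos α ^ 2 * (deriv θ α) ^ 2)) ≥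
        π * Real.cos α₀ +
          ∫ α in (-α₀)..α₀, Real.sqrt (1 - Real.cos α₀ ^ 2 / Real.cos α ^ 2)) ∧
    (∫ α in (-α₀)..α₀,
        Real.sqrt (1 + Real.cos α ^ 2 *
          (deriv (fun a =>
            Real.arcsin (Real.cos α₀ / Real.sin α₀ * Real.tan a) + π / 2) α) ^ 2)) =
      π * Real.cos α₀ +
        ∫ α in (-α₀)..α₀, Real.sqrt (1 - Real.cos α₀ ^ 2 / Real.cos α ^ 2) := by
  have hab : (-α₀ : ℝ) ≤ α₀ := by linarith
  have hpi : (0:ℝ) < π := Real.pi_pos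
  have hc₀ : 0 < Real.cos α₀ := Real.cos_pos_of_mem_Ioo ⟨by linarith, h1⟩
  have hs₀ : 0 < Real.sin α₀ := Real.sin_pos_of_pos_of_lt_pi h0 (by linarith)
  have hcos_ge : ∀ a ∈ Set.Icc (-α₀) α₀, Real.cos α₀ ≤ Real.cos a := by
    intro a ha
    rw [← Real.cos_abs a]
    exact Real.cos_le_cos_of_nonneg_of_le_pi (abs_nonneg a) (by linarith)
      (abs_le.2 ⟨ha.1, ha.2⟩)
  have hcos_gt : ∀ a ∈ Set.Ioo (-α₀) α₀, Real.cos α₀ < Real.cos a := by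
    intro a ha
    rw [← Real.cos_abs a]
    exact Real.cos_lt_cos_of_nonneg_of_le_pi (abs_nonneg a) (by linarith)
      (abs_lt.2 ⟨ha.1, ha.2⟩)
  have hcos_pos : ∀ a ∈ Set.Icc (-α₀) α₀, 0 < Real.cos a :=
    fun a ha => lt_of_lt_of_le hc₀ (hcos_ge a ha)
  set q : ℝ → ℝ := fun a => Real.sqrt (1 - Real.cos α₀ ^ 2 / Real.cos a ^ 2) with hq
  have hqcont : ContinuousOn q (Set.Icc (-α₀) α₀) := by
    apply Real.continuous_sqrt.comp_continuousOn
    apply ContinuousOn.sub continuousOn_const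
    exact ContinuousOn.div continuousOn_const
      (Real.continuous_cos.pow 2).continuousOn
      (fun a ha => pow_ne_zero 2 (ne_of_gt (hcos_pos a ha)))
  have hqint : IntervalIntegrable q MeasureTheory.volume (-α₀) α₀ :=
    (hqcont.mono (by rw [Set.uIcc_of_le hab])).intervalIntegrable
  constructor
  · -- Part 1: lower bound
    intro θ hθ hθa hθb
    have hd : Continuous (deriv θ) := hθ.continuous_deriv le_rfl
    have hFcont : Continuous fun a => Real.sqrt (1 + Real.cos a ^ 2 * (deriv θ a) ^ 2) := by
      apply Real.continuous_sqrt.comp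
      exact continuous_const.add ((Real.continuous_cos.pow 2).mul (hd.pow 2))
    have hhint : IntervalIntegrable (fun a => q a + Real.cos α₀ * deriv θ a)
        MeasureTheory.volume (-α₀) α₀ :=
      hqint.add ((hd.intervalIntegrable _ _).const_mul _)
    have hmono : (∫ α in (-α₀)..α₀, (q α + Real.cos α₀ * deriv θ α)) ≤
        ∫ α in (-α₀)..α₀, Real.sqrt (1 + Real.cos α ^ 2 * (deriv θ α) ^ 2) := by
      apply intervalIntegral.integral_mono_on hab hhint (hFcont.intervalIntegrable _ _)
      intro a ha
      exact stmt14_key (Real.cos α₀) (Real.cos a) (deriv θ a) hc₀ (hcos_ge a ha)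
    have hsplit : (∫ α in (-α₀)..α₀, (q α + Real.cos α₀ * deriv θ α)) =
        (∫ α in (-α₀)..α₀, q α) + Real.cos α₀ * π := by
      rw [intervalIntegral.integral_add hqint ((hd.intervalIntegrable _ _).const_mul _),
        intervalIntegral.integral_const_mul,
        intervalIntegral.integral_deriv_eq_sub
          (fun x _ => (hθ.differentiable one_ne_zero).differentiableAt)
          (hd.intervalIntegrable _ _), hθa, hθb, sub_zero]
    rw [ge_iff_le]
    calc π * Real.cos α₀ + ∫ α in (-α₀)..α₀, q α
        = (∫ α in (-α₀)..α₀, (q α + Real.cos α₀ * deriv θ α)) := by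
          rw [hsplit]; ring
      _ ≤ _ := hmono
  · -- Part 2: the minimizer
    set k := Real.cos α₀ / Real.sin α₀ with hk
    have hkpos : 0 < k := div_pos hc₀ hs₀
    set θs : ℝ → ℝ := fun a => Real.arcsin (k * Real.tan a) + π / 2 with hθs
    set g : ℝ → ℝ := fun a =>
      Real.cos α₀ / (Real.cos a * Real.sqrt (Real.cos a ^ 2 - Real.cos α₀ ^ 2)) with hg
    have htan_a0 : k * Real.tan α₀ = 1 := by
      rw [Real.tan_eq_sin_div_cos, hk]
      field_simp
    have hderiv : ∀ x ∈ Set.Ioo (-α₀) α₀, HasDerivAt θs (g x) x := by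
      intro x hx
      have hxIcc : x ∈ Set.Icc (-α₀) α₀ := Set.mem_Icc.2 ⟨le_of_lt hx.1, le_of_lt hx.2⟩
      have hcx : 0 < Real.cos x := hcos_pos x hxIcc
      have hclt : Real.cos α₀ < Real.cos x := hcos_gt x hx
      have hxmem : x ∈ Set.Ioo (-(π/2)) (π/2) := ⟨by linarith [hx.1], by linarith [hx.2]⟩
      have ha0mem : α₀ ∈ Set.Ioo (-(π/2)) (π/2) := ⟨by linarith, h1⟩
      have hna0mem : -α₀ ∈ Set.Ioo (-(π/2)) (π/2) := ⟨by linarith, by linarith⟩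
      have ht1 : Real.tan x < Real.tan α₀ := Real.strictMonoOn_tan hxmem ha0mem hx.2
      have ht2 : -Real.tan α₀ < Real.tan x := by
        have := Real.strictMonoOn_tan hna0mem hxmem hx.1
        rwa [Real.tan_neg] at this
      set u := k * Real.tan x with hu
      have hu1 : u < 1 := by
        rw [← htan_a0]; exact (mul_lt_mul_iff_right₀ hkpos).2 ht1
      have hu2 : -1 < u := by
        have : k * (-Real.tan α₀) < k * Real.tan x := (mul_lt_mul_iff_right₀ hkpos).2 ht2
        rwa [mul_neg, htan_a0] at this
      have harcsin : HasDerivAt Real.arcsin (1 / Real.sqrt (1 - u ^ 2)) u :=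
        Real.hasDerivAt_arcsin (by linarith) (by linarith)
      have htan : HasDerivAt (fun a => k * Real.tan a) (k * (1 / Real.cos x ^ 2)) x :=
        (Real.hasDerivAt_tan (ne_of_gt hcx)).const_mul k
      have hcomp : HasDerivAt θs (1 / Real.sqrt (1 - u ^ 2) * (k * (1 / Real.cos x ^ 2))) x := by
        rw [hθs]
        exact (harcsin.comp x htan).add_const (π / 2)
      set U := Real.sqrt (Real.cos x ^ 2 - Real.cos α₀ ^ 2) with hU
      have hU2 : U ^ 2 = Real.cos x ^ 2 - Real.cos α₀ ^ 2 := Real.sq_sqrt (by nlinarith)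
      have hUpos : 0 < U := Real.sqrt_pos.2 (by nlinarith)
      have hsx : Real.sin x ^ 2 = 1 - Real.cos x ^ 2 := by
        nlinarith [Real.sin_sq_add_cos_sq x]
      have hs0sq : Real.sin α₀ ^ 2 = 1 - Real.cos α₀ ^ 2 := by
        nlinarith [Real.sin_sq_add_cos_sq α₀]
      have hsq : Real.sqrt (1 - u ^ 2) = U / (Real.sin α₀ * Real.cos x) := by
        rw [show (1:ℝ) - u ^ 2 = (U / (Real.sin α₀ * Real.cos x)) ^ 2 by
          rw [hu, hk, Real.tan_eq_sin_div_cos]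
          field_simp
          linear_combination (Real.cos x ^ 2) * hs0sq - (Real.cos α₀ ^ 2) * hsx
            - hU2]
        exact Real.sqrt_sq (by positivity)
      have hval : 1 / Real.sqrt (1 - u ^ 2) * (k * (1 / Real.cos x ^ 2)) = g x := by
        simp only [hg, hsq, hk, ← hU]
        field_simp
      exact hval ▸ hcomp
    have hcont : ContinuousOn θs (Set.Icc (-α₀) α₀) := by
      apply ContinuousOn.add _ continuousOn_const
      apply Real.continuous_arcsin.comp_continuousOn
      apply ContinuousOn.mul continuousOn_const
      exact Real.continuousOn_tan.mono fun a ha => ne_of_gt (hcos_pos a ha)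
    have hgnn : ∀ x ∈ Set.Ioo (-α₀) α₀, 0 ≤ g x := by
      intro x hx
      have hcx : 0 < Real.cos x := hcos_pos x ⟨le_of_lt hx.1, le_of_lt hx.2⟩
      exact div_nonneg (le_of_lt hc₀) (by positivity)
    have hgint : IntervalIntegrable g MeasureTheory.volume (-α₀) α₀ := by
      apply intervalIntegral.intervalIntegrable_deriv_of_nonneg (g := θs)
      · rwa [Set.uIcc_of_le hab]
      · rwa [min_eq_left hab, max_eq_right hab]
      · rwa [min_eq_left hab, max_eq_right hab]
    have hgval : (∫ a in (-α₀)..α₀, g a) = π := by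
      rw [intervalIntegral.integral_eq_sub_of_hasDeriv_right_of_le hab hcont
        (fun x hx => (hderiv x hx).hasDerivWithinAt) hgint]
      have h2 : θs α₀ = π := by
        simp only [hθs, htan_a0, Real.arcsin_one]; ring
      have h3 : θs (-α₀) = 0 := by
        simp only [hθs, Real.tan_neg, mul_neg, htan_a0, Real.arcsin_neg_one]; ring
      rw [h2, h3, sub_zero]
    have hcongr : (∫ α in (-α₀)..α₀,
        Real.sqrt (1 + Real.cos α ^ 2 * (deriv θs α) ^ 2)) =
        ∫ α in (-α₀)..α₀, (q α + Real.cos α₀ * g α) := by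
      apply intervalIntegral.integral_congr_ae
      have hend : ∀ᵐ (x : ℝ), x ≠ α₀ := by
        refine MeasureTheory.ae_iff.2 ?_
        simp [MeasureTheory.measure_singleton]
      filter_upwards [hend] with x hxne hxmem
      rw [Set.uIoc_of_le hab] at hxmem
      have hxIoo : x ∈ Set.Ioo (-α₀) α₀ := ⟨hxmem.1, lt_of_le_of_ne hxmem.2 hxne⟩
      have hdx : deriv θs x = g x := (hderiv x hxIoo).deriv
      have hclt : Real.cos α₀ < Real.cos x := hcos_gt x hxIoo
      rw [hdx]
      simp only [hg, hq]
      exact stmt14_eq (Real.cos α₀) (Real.cos x) hc₀ hclt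
    calc (∫ α in (-α₀)..α₀,
        Real.sqrt (1 + Real.cos α ^ 2 * (deriv θs α) ^ 2))
        = ∫ α in (-α₀)..α₀, (q α + Real.cos α₀ * g α) := hcongr
      _ = (∫ α in (-α₀)..α₀, q α) + Real.cos α₀ * ∫ α in (-α₀)..α₀, g α := by
          rw [intervalIntegral.integral_add hqint (hgint.const_mul _),
            intervalIntegral.integral_const_mul]
      _ = π * Real.cos α₀ + ∫ α in (-α₀)..α₀, q α := by rw [hgval]; ring
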